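/- Let A be a unital commutative real algebra, L : A → ℝ linear positive semidefinite with L(1) = 1 and all C_a = sup_{n≥1}(L(a^{2n}))^{1/(2n)} finite. Suppose L is represented by a positive Radon measure ν on K_L = {α ∈ X(A) : |α(b)| ≤ C_b for all b ∈ A}. Then a ∈ Q_L (i.e., L(b²a) ≥ 0 for all b) if and only if C_{C_a − a} ≤ C_a. -/

import Mathlib

open MeasureTheory

/-- A character of a unital commutative real algebra, as a function `A → ℝ`. -/
def IsChar {A : Type*} [CommRing A] [Algebra ℝ A] (α : A → ℝ) : Prop :=
  α 1 = 1 ∧ (∀ x y : A, α (x + y) = α x + α y) ∧ (∀ x y : A, α (x * y) = α x * α y) ∧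
    ∀ (c : ℝ) (x : A), α (c • x) = c * α x

/-- The set of values `(L(a^{2n}))^{1/(2n)}`, `n ≥ 1`. -/
def Cset {A : Type*} [CommRing A] [Algebra ℝ A] (L : A →ₗ[ℝ] ℝ) (a : A) : Set ℝ :=
  {x : ℝ | ∃ n : ℕ, 1 ≤ n ∧ x = (L (a ^ (2 * n))) ^ (((2 * n : ℕ) : ℝ))⁻¹}

section helpers
variable {A : Type*} [CommRing A] [Algebra ℝ A] {α : A → ℝ}

lemma IsChar.map_zero' (h : IsChar α) : α 0 = 0 := by
  have := h.2.1 0 0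
  simp at this
  linarith

lemma IsChar.map_sub' (h : IsChar α) (x y : A) : α (x - y) = α x - α y := by
  have h1 := h.2.1 (x - y) y
  simp at h1
  linarith

lemma IsChar.map_pow' (h : IsChar α) (x : A) (n : ℕ) : α (x ^ n) = α x ^ n := by
  induction n with
  | zero => simpa using h.1
  | succ k ih => rw [pow_succ, pow_succ, h.2.2.1, ih]

lemma IsChar.map_algebraMap' (h : IsChar α) (c : ℝ) : α (algebraMap ℝ A c) = c := by
  rw [Algebra.algebraMap_eq_smul_one, h.2.2.2, h.1, mul_one]

/-- `(L(a^{2n}))^{1/(2n)} ≤ M` when `L(a^{2n}) ≤ M^{2n}`, `M ≥ 0`. -/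
lemma rpow_elem_le {v M : ℝ} (hM : 0 ≤ M) (hv : 0 ≤ v) (n : ℕ) (hn : 1 ≤ n)
    (h : v ≤ M ^ (2 * n)) : v ^ (((2 * n : ℕ) : ℝ))⁻¹ ≤ M := by
  have h2n : (0 : ℝ) < ((2 * n : ℕ) : ℝ) := by positivity
  calc v ^ (((2 * n : ℕ) : ℝ))⁻¹ ≤ (M ^ (2 * n)) ^ (((2 * n : ℕ) : ℝ))⁻¹ :=
        Real.rpow_le_rpow hv h (by positivity)
    _ = M := by
        rw [← Real.rpow_natCast M (2 * n), ← Real.rpow_mul hM]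
        rw [mul_inv_cancel₀ (ne_of_gt h2n), Real.rpow_one]
end helpers

theorem stmt_14 {A : Type*} [CommRing A] [Algebra ℝ A]
    (L : A →ₗ[ℝ] ℝ) (hpsd : ∀ x : A, 0 ≤ L (x ^ 2)) (hone : L 1 = 1)
    (hfin : ∀ a : A, BddAbove (Cset L a))
    (KL : Set (A → ℝ))
    (hKL : KL = {α : A → ℝ | IsChar α ∧ ∀ b : A, |α b| ≤ sSup (Cset L b)})
    (ν : Measure KL) (hrep : ∀ a : A, L a = ∫ α : KL, (α : A → ℝ) a ∂ν) :
    ∀ a : A,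
      (∀ b : A, 0 ≤ L (b ^ 2 * a)) ↔
        sSup (Cset L (algebraMap ℝ A (sSup (Cset L a)) - a)) ≤ sSup (Cset L a) := by
  -- basic facts about characters in KL
  have hmemKL : ∀ β : KL, IsChar (β : A → ℝ) ∧ ∀ b : A, |(β : A → ℝ) b| ≤ sSup (Cset L b) :=
    fun β => (Set.ext_iff.mp hKL β.1).mp β.2
  have hchar : ∀ β : KL, IsChar (β : A → ℝ) := fun β => (hmemKL β).1
  have hbd : ∀ (β : KL) (b : A), |(β : A → ℝ) b| ≤ sSup (Cset L b) :=
    fun β => (hmemKL β).2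
  -- nonneg of each element of Cset
  have hcs_nonneg : ∀ b : A, ∀ x ∈ Cset L b, 0 ≤ x := by
    rintro b x ⟨n, hn, rfl⟩
    have : 0 ≤ L (b ^ (2 * n)) := by
      have h := hpsd (b ^ n); rw [← pow_mul, mul_comm n 2] at h; exact h
    positivity
  have hC_nonneg : ∀ b : A, 0 ≤ sSup (Cset L b) := by
    intro b
    have hmem : (L (b ^ (2 * 1))) ^ (((2 * 1 : ℕ) : ℝ))⁻¹ ∈ Cset L b := ⟨1, le_refl 1, rfl⟩
    exact le_trans (hcs_nonneg b _ hmem) (le_csSup (hfin b) hmem)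
  -- the measure is a probability measure
  have hν1 : (ν Set.univ).toReal = 1 := by
    have h1 := hrep 1
    rw [hone] at h1
    have : ∫ β : KL, (β : A → ℝ) 1 ∂ν = ∫ _ : KL, (1 : ℝ) ∂ν := by
      apply integral_congr_ae; filter_upwards with β; exact (hchar β).1
    rw [this, integral_const, smul_eq_mul, mul_one] at h1
    exact h1.symm
  have hνfin : IsFiniteMeasure ν := by
    constructor
    by_contra h
    rw [not_lt, top_le_iff] at h
    rw [h, ENNReal.toReal_top] at hν1
    norm_num at hν1
  -- measurability of evaluation maps
  have hmeas : ∀ b : A, Measurable (fun β : KL => (β : A → ℝ) b) :=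
    fun b => (measurable_pi_apply b).comp measurable_subtype_coe
  intro a
  set C : ℝ := sSup (Cset L a) with hCdef
  have hC0 : 0 ≤ C := hC_nonneg a
  set f : KL → ℝ := fun β => (β : A → ℝ) a with hfdef
  have hfC : ∀ β : KL, |f β| ≤ C := fun β => hbd β a
  have hmf : Measurable f := hmeas a
  -- pointwise values of α on the elements we test
  have hval : ∀ (β : KL) (n : ℕ),
      (β : A → ℝ) ((algebraMap ℝ A C - a) ^ (2 * n)) = (C - f β) ^ (2 * n) := by
    intro β n
    rw [(hchar β).map_pow', (hchar β).map_sub', (hchar β).map_algebraMap']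
  constructor
  · -- forward direction
    intro hq
    -- Step 1: f ≥ -ε a.e. for every ε > 0
    have step1 : ∀ ε : ℝ, 0 < ε → ν {β : KL | f β < -ε} = 0 := by
      intro ε hε
      set S : Set KL := {β : KL | f β < -ε} with hSdef
      have hSmeas : MeasurableSet S := hmf measurableSet_Iio
      have hεC : (0:ℝ) < C + ε := by linarith
      have hbound : ∀ n : ℕ, (ν S).toReal ≤ (C / (C + ε)) ^ (2 * n) * (C / ε) := by
        intro n
        set g : KL → ℝ := fun β => (C - f β) ^ (2 * n) * f β with hgdef
        set h : KL → ℝ := S.indicator (fun _ => ε * (C + ε) ^ (2 * n)) with hhdef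
        have hmg : Measurable g := ((measurable_const.sub hmf).pow_const _).mul hmf
        have hgint : Integrable g ν := by
          refine (integrable_const ((2 * C) ^ (2 * n) * C)).mono'
            hmg.aestronglyMeasurable ?_
          filter_upwards with β
          have h1 : |C - f β| ≤ 2 * C := by
            have := abs_le.mp (hfC β); rw [abs_le]; constructor <;> linarith [this.1, this.2]
          have h2 : |f β| ≤ C := hfC β
          calc ‖g β‖ = |C - f β| ^ (2 * n) * |f β| := by
                rw [hgdef]; simp [Real.norm_eq_abs, abs_mul, abs_pow]
            _ ≤ (2 * C) ^ (2 * n) * C :=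
                mul_le_mul (pow_le_pow_left₀ (abs_nonneg _) h1 _) h2 (abs_nonneg _)
                  (by positivity)
        have hhint : Integrable h ν := (integrable_const _).indicator hSmeas
        -- pointwise bound
        have pt : ∀ β : KL, g β + h β ≤ C ^ (2 * n) * C := by
          intro β
          have hRHS : (0:ℝ) ≤ C ^ (2 * n) * C := by positivity
          by_cases hβ : β ∈ S
          · have hf : f β < -ε := hβ
            have hhβ : h β = ε * (C + ε) ^ (2 * n) := by
              rw [hhdef, Set.indicator_of_mem hβ]
            have hP : (0:ℝ) ≤ (C + ε) ^ (2 * n) := by positivity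
            have h1 : (C + ε) ^ (2 * n) ≤ (C - f β) ^ (2 * n) :=
              pow_le_pow_left₀ (le_of_lt hεC) (by linarith) _
            have e1 : (C - f β) ^ (2 * n) * f β ≤ (C + ε) ^ (2 * n) * f β :=
              mul_le_mul_of_nonpos_right h1 (by linarith)
            have e2 : (C + ε) ^ (2 * n) * f β ≤ (C + ε) ^ (2 * n) * (-ε) :=
              mul_le_mul_of_nonneg_left (by linarith) hP
            rw [hhβ]
            simp only [hgdef]
            nlinarith [e1, e2]
          · have hhβ : h β = 0 := by rw [hhdef, Set.indicator_of_notMem hβ]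
            have hf : -ε ≤ f β := by
              simp only [hSdef, Set.mem_setOf_eq, not_lt] at hβ; exact hβ
            rw [hhβ, add_zero]
            rcases le_or_gt (f β) 0 with hf0 | hf0
            · have : g β ≤ 0 := mul_nonpos_of_nonneg_of_nonpos (Even.pow_nonneg (even_two_mul n) _) hf0
              linarith
            · have hfle : f β ≤ C := le_trans (le_abs_self _) (hfC β)
              have h2 : (C - f β) ^ (2 * n) ≤ C ^ (2 * n) :=
                pow_le_pow_left₀ (by linarith) (by linarith) _
              exact mul_le_mul h2 hfle (le_of_lt hf0) (by positivity)
        -- integrate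
        have hint : ∫ β, (g β + h β) ∂ν ≤ ∫ _ : KL, C ^ (2 * n) * C ∂ν :=
          integral_mono (hgint.add hhint) (integrable_const _) pt
        rw [integral_add hgint hhint, integral_const, measureReal_def, hν1, one_smul] at hint
        have hg0 : 0 ≤ ∫ β, g β ∂ν := by
          have hq' := hq ((algebraMap ℝ A C - a) ^ n)
          rw [← pow_mul, mul_comm n 2] at hq'
          have heq : L ((algebraMap ℝ A C - a) ^ (2 * n) * a) = ∫ β, g β ∂ν := by
            rw [hrep]
            apply integral_congr_ae
            filter_upwards with β
            rw [(hchar β).2.2.1, hval β n]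
          rw [heq] at hq'
          exact hq'
        have hih : ∫ β, h β ∂ν = (ν S).toReal * (ε * (C + ε) ^ (2 * n)) := by
          rw [hhdef, integral_indicator_const _ hSmeas, smul_eq_mul, measureReal_def]
        rw [hih] at hint
        rw [div_pow, div_mul_div_comm, le_div_iff₀ (by positivity)]
        nlinarith [hint, hg0]
      -- take the limit
      have hr0 : (0:ℝ) ≤ C / (C + ε) := by positivity
      have hr1 : C / (C + ε) < 1 := (div_lt_one hεC).mpr (by linarith)
      have htend : Filter.Tendsto (fun n : ℕ => (C / (C + ε)) ^ (2 * n) * (C / ε))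
          Filter.atTop (nhds 0) := by
        have h1 : Filter.Tendsto (fun n : ℕ => ((C / (C + ε)) ^ 2) ^ n)
            Filter.atTop (nhds 0) :=
          tendsto_pow_atTop_nhds_zero_of_lt_one (by positivity) (by nlinarith)
        have h2 := h1.mul_const (C / ε)
        rw [zero_mul] at h2
        convert h2 using 2 with n
        rw [← pow_mul]
      have hle0 : (ν S).toReal ≤ 0 := ge_of_tendsto' htend hbound
      have h0 : (ν S).toReal = 0 := le_antisymm hle0 ENNReal.toReal_nonneg
      rcases (ENNReal.toReal_eq_zero_iff _).mp h0 with h | h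
      · exact h
      · exact absurd h (measure_ne_top ν S)
    -- Step 2: f ≥ 0 a.e.
    have hae : ∀ᵐ β ∂ν, 0 ≤ f β := by
      have hall : ∀ᵐ β ∂ν, ∀ k : ℕ, ¬ (f β < -(1 / ((k:ℝ) + 1))) := by
        rw [ae_all_iff]
        intro k
        refine ae_iff.mpr ?_
        simp only [not_not]
        exact step1 _ (by positivity)
      filter_upwards [hall] with β hβ
      by_contra hneg
      push_neg at hneg
      obtain ⟨k, hk⟩ := exists_nat_one_div_lt (show (0:ℝ) < -f β by linarith)
      exact hβ k (by push_cast at hk ⊢; linarith)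
    -- Step 3: conclude
    apply Real.sSup_le _ hC0
    rintro x ⟨n, hn, rfl⟩
    have hv0 : 0 ≤ L ((algebraMap ℝ A C - a) ^ (2 * n)) := by
      have h := hpsd ((algebraMap ℝ A C - a) ^ n)
      rw [← pow_mul, mul_comm n 2] at h
      exact h
    have hint1 : Integrable (fun β : KL => (C - f β) ^ (2 * n)) ν := by
      refine (integrable_const ((2 * C) ^ (2 * n))).mono'
        ((measurable_const.sub hmf).pow_const _).aestronglyMeasurable ?_
      filter_upwards with β
      have h1 : |C - f β| ≤ 2 * C := by
        have := abs_le.mp (hfC β); rw [abs_le]; constructor <;> linarith [this.1, this.2]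
      calc ‖(C - f β) ^ (2 * n)‖ = |C - f β| ^ (2 * n) := by
            rw [Real.norm_eq_abs, abs_pow]
        _ ≤ (2 * C) ^ (2 * n) := pow_le_pow_left₀ (abs_nonneg _) h1 _
    have hvle : L ((algebraMap ℝ A C - a) ^ (2 * n)) ≤ C ^ (2 * n) := by
      rw [hrep]
      have e1 : ∫ β : KL, (β : A → ℝ) ((algebraMap ℝ A C - a) ^ (2 * n)) ∂ν
          = ∫ β : KL, (C - f β) ^ (2 * n) ∂ν := by
        apply integral_congr_ae
        filter_upwards with β
        exact hval β n
      rw [e1]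
      have e2 : ∫ β : KL, (C - f β) ^ (2 * n) ∂ν ≤ ∫ _ : KL, C ^ (2 * n) ∂ν := by
        apply integral_mono_ae hint1 (integrable_const _)
        filter_upwards [hae] with β hβ
        have hfle : f β ≤ C := le_trans (le_abs_self _) (hfC β)
        have h1 : |C - f β| ≤ C := abs_le.mpr ⟨by linarith, by linarith⟩
        have h2 : |C - f β| ^ (2 * n) ≤ C ^ (2 * n) :=
          pow_le_pow_left₀ (abs_nonneg _) h1 _
        rwa [pow_abs, abs_of_nonneg (Even.pow_nonneg (even_two_mul n) _)] at h2
      rw [integral_const, measureReal_def, hν1, one_smul] at e2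
      exact e2
    exact rpow_elem_le hC0 hv0 n hn hvle
  · -- converse direction
    intro hC b
    have hnn : ∀ β : KL, 0 ≤ f β := by
      intro β
      have h1 : |(β : A → ℝ) (algebraMap ℝ A C - a)| ≤ C :=
        le_trans (hbd β _) hC
      rw [(hchar β).map_sub', (hchar β).map_algebraMap'] at h1
      have := abs_le.mp h1
      linarith [this.2]
    rw [hrep (b ^ 2 * a)]
    apply integral_nonneg
    intro β
    have : (β : A → ℝ) (b ^ 2 * a) = ((β : A → ℝ) b) ^ 2 * f β := by
      rw [(hchar β).2.2.1, (hchar β).map_pow']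
    show (0 : ℝ) ≤ (β : A → ℝ) (b ^ 2 * a)
    rw [this]
    exact mul_nonneg (sq_nonneg _) (hnn β)
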